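/- Let M ⊆ ℝᴺ be compact, let T₁ < T₂ and k ≥ 0, let v and uₙ (n ∈ ℕ) be continuous vector fields ℝᴺ → ℝᴺ such that uₙ → v uniformly on M, and let φ⁽ⁿ⁾ : [T₁,T₂] → ℝᴺ be admissible paths with derivatives gₙ taking all their values in M and satisfying (1/4)∫_{T₁}^{T₂} ‖gₙ(t) − uₙ(φ⁽ⁿ⁾(t))‖² dt ≤ k for every n. Then the family (φ⁽ⁿ⁾) is uniformly equicontinuous, and there exist a strictly increasing function σ : ℕ → ℕ and an admissible path φ : [T₁,T₂] → ℝᴺ with derivative g, taking all its values in M, such that φ^{(σ(n))} → φ uniformly on [T₁,T₂] and (1/4)∫_{T₁}^{T₂} ‖g(t) − v(φ(t))‖² dt ≤ k. (Compactness of sublevel sets and lower semicontinuity of the Freidlin–Wentzell action under uniform convergence of both paths and drift vector fields.) -/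

import Mathlib

open MeasureTheory Set

open Filter Topology
open scoped ENNReal NNReal

local notation "⟪" x ", " y "⟫" => @inner ℝ _ _ x y

lemma L2_norm_sq {α : Type*} {m : MeasurableSpace α} {μ : Measure α}
    {E : Type*} [NormedAddCommGroup E] [InnerProductSpace ℝ E]
    (f : Lp E 2 μ) : ‖f‖ ^ 2 = ∫ a, ‖f a‖ ^ 2 ∂μ := by
  rw [← real_inner_self_eq_norm_sq, L2.inner_def]
  exact integral_congr_ae (Eventually.of_forall fun a => real_inner_self_eq_norm_sq _)

lemma Lp_norm_sq_eq {α : Type*} {m : MeasurableSpace α} {μ : Measure α}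
    {E : Type*} [NormedAddCommGroup E] [InnerProductSpace ℝ E]
    {f : α → E} (F : Lp E 2 μ) (h : ⇑F =ᵐ[μ] f) : ‖F‖ ^ 2 = ∫ a, ‖f a‖ ^ 2 ∂μ := by
  rw [L2_norm_sq]
  exact integral_congr_ae (h.mono fun a ha => by simp only []; rw [ha])

lemma le_of_sq_le_sq' {a b : ℝ} (ha : 0 ≤ a) (hb : 0 ≤ b) (h : a ^ 2 ≤ b ^ 2) : a ≤ b := by
  nlinarith

lemma tendsto_of_forall_inner {E : Type*} [NormedAddCommGroup E] [InnerProductSpace ℝ E]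
    [FiniteDimensional ℝ E] (x : ℕ → E) (a : E)
    (h : ∀ c : E, Tendsto (fun n => ⟪c, x n⟫) atTop (𝓝 ⟪c, a⟫)) :
    Tendsto x atTop (𝓝 a) := by
  set b := stdOrthonormalBasis ℝ E with hb
  have hx : ∀ n, x n = ∑ i, ⟪b i, x n⟫ • b i := fun n => (b.sum_repr' (x n)).symm
  have ha : a = ∑ i, ⟪b i, a⟫ • b i := (b.sum_repr' a).symm
  rw [show x = fun n => ∑ i, ⟪b i, x n⟫ • b i from funext hx, ha]
  exact tendsto_finset_sum _ fun i _ => (h (b i)).smul_const (b i)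
lemma exists_weak_subseq {H : Type*} [NormedAddCommGroup H] [InnerProductSpace ℝ H]
    [CompleteSpace H] [SecondCountableTopology H]
    (x : ℕ → H) (C : ℝ) (hx : ∀ n, ‖x n‖ ≤ C) :
    ∃ σ : ℕ → ℕ, StrictMono σ ∧ ∃ y : H, ‖y‖ ≤ C ∧
      ∀ z : H, Tendsto (fun n => ⟪z, x (σ n)⟫) atTop (𝓝 ⟪z, y⟫) := by
  have hC : 0 ≤ C := le_trans (norm_nonneg _) (hx 0)
  haveI : Nonempty H := ⟨0⟩
  set d : ℕ → H := TopologicalSpace.denseSeq H with hd_def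
  have hd : DenseRange d := TopologicalSpace.denseRange_denseSeq H
  -- bounded inner products
  have hbdd : ∀ m n, ⟪d m, x n⟫ ∈ Icc (-(‖d m‖ * C)) (‖d m‖ * C) := by
    intro m n
    have h1 : |⟪d m, x n⟫| ≤ ‖d m‖ * C := by
      refine le_trans (abs_real_inner_le_norm _ _) ?_
      exact mul_le_mul_of_nonneg_left (hx n) (norm_nonneg _)
    exact ⟨neg_le_of_abs_le h1, le_of_abs_le h1⟩
  -- diagonal extraction via compactness of the product of intervals
  have hcomp : IsCompact (univ.pi fun m : ℕ => Icc (-(‖d m‖ * C)) (‖d m‖ * C)) :=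
    isCompact_univ_pi fun m => isCompact_Icc
  obtain ⟨L, -, σ, hσ, hL⟩ := hcomp.tendsto_subseq
    (x := fun n => (fun m => ⟪d m, x n⟫)) (fun n => by rw [Set.mem_univ_pi]; exact fun m => hbdd m n)
  have hLm : ∀ m, Tendsto (fun n => ⟪d m, x (σ n)⟫) atTop (𝓝 (L m)) := by
    intro m
    have := hL
    rw [tendsto_pi_nhds] at this
    exact this m
  -- Cauchy for every z
  have hcauchy : ∀ z : H, ∃ l : ℝ, Tendsto (fun n => ⟪z, x (σ n)⟫) atTop (𝓝 l) := by
    intro z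
    have hc : CauchySeq fun n => ⟪z, x (σ n)⟫ := by
      rw [Metric.cauchySeq_iff]
      intro ε hε
      obtain ⟨m, hm⟩ := Metric.denseRange_iff.1 hd z (ε / (4 * (C + 1))) (by positivity)
      have hbc : CauchySeq fun n => ⟪d m, x (σ n)⟫ := (hLm m).cauchySeq
      obtain ⟨N, hN⟩ := Metric.cauchySeq_iff.1 hbc (ε / 2) (by positivity)
      refine ⟨N, fun i hi j hj => ?_⟩
      have key : ∀ n, dist ⟪z, x (σ n)⟫ ⟪d m, x (σ n)⟫ ≤ ε / 4 := by
        intro n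
        rw [Real.dist_eq, ← inner_sub_left]
        refine le_trans (abs_real_inner_le_norm _ _) ?_
        have h1 : ‖z - d m‖ ≤ ε / (4 * (C + 1)) := by
          rw [← dist_eq_norm]; exact hm.le
        calc ‖z - d m‖ * ‖x (σ n)‖ ≤ (ε / (4 * (C + 1))) * C :=
              mul_le_mul h1 (hx _) (norm_nonneg _) (by positivity)
          _ ≤ ε / 4 := by
              rw [div_mul_eq_mul_div, div_le_div_iff₀ (by positivity) (by positivity)]
              nlinarith
      calc dist ⟪z, x (σ i)⟫ ⟪z, x (σ j)⟫
          ≤ dist ⟪z, x (σ i)⟫ ⟪d m, x (σ i)⟫ + dist ⟪d m, x (σ i)⟫ ⟪d m, x (σ j)⟫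
            + dist ⟪d m, x (σ j)⟫ ⟪z, x (σ j)⟫ := dist_triangle4 _ _ _ _
        _ < ε / 4 + ε / 2 + ε / 4 := by
            have := hN i hi j hj
            have k1 := key i
            have k2 := key j
            rw [dist_comm ⟪d m, x (σ j)⟫] at *
            linarith [key i, key j, hN i hi j hj]
        _ = ε := by ring
    exact cauchySeq_tendsto_of_complete hc
  choose f hf using hcauchy
  -- f is linear and bounded
  have hadd : ∀ z w : H, f (z + w) = f z + f w := by
    intro z w
    refine tendsto_nhds_unique ?_ ((hf z).add (hf w))
    simpa [inner_add_left] using hf (z + w)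
  have hsmul : ∀ (c : ℝ) (z : H), f (c • z) = c * f z := by
    intro c z
    refine tendsto_nhds_unique ?_ ((hf z).const_mul c)
    simpa [inner_smul_left] using hf (c • z)
  have hbound : ∀ z : H, |f z| ≤ C * ‖z‖ := by
    intro z
    refine le_of_tendsto (hf z).abs (Eventually.of_forall fun n => ?_)
    refine le_trans (abs_real_inner_le_norm _ _) ?_
    have := mul_le_mul_of_nonneg_left (hx (σ n)) (norm_nonneg z)
    nlinarith [norm_nonneg z]
  let F : H →L[ℝ] ℝ := LinearMap.mkContinuous
    { toFun := f, map_add' := hadd, map_smul' := hsmul } C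
    (fun z => by simpa using hbound z)
  set y : H := (InnerProductSpace.toDual ℝ H).symm F with hy_def
  have hyz : ∀ z : H, ⟪y, z⟫ = F z := fun z => InnerProductSpace.toDual_symm_apply
  refine ⟨σ, hσ, y, ?_, ?_⟩
  · -- ‖y‖ ≤ C
    have h1 : ‖y‖ ^ 2 = f y := by
      rw [← real_inner_self_eq_norm_sq]
      exact hyz y
    have h2 : |f y| ≤ C * ‖y‖ := hbound y
    nlinarith [norm_nonneg y, abs_nonneg (f y), le_abs_self (f y)]
  · intro z
    have : ⟪z, y⟫ = f z := by rw [real_inner_comm]; exact hyz z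
    rw [this]; exact hf z
lemma holder_bound {E : Type*} [NormedAddCommGroup E] [NormedSpace ℝ E]
    {f : ℝ → E} {T₁ T₂ : ℝ}
    (hf2 : IntegrableOn (fun t => ‖f t‖ ^ 2) (Icc T₁ T₂))
    (hf1 : IntegrableOn f (Icc T₁ T₂))
    {K : ℝ} (hK : 0 < K) (hb : (∫ t in Icc T₁ T₂, ‖f t‖ ^ 2) ≤ K ^ 2)
    {s t : ℝ} (hs : T₁ ≤ s) (hst : s ≤ t) (ht : t ≤ T₂) :
    ‖∫ x in s..t, f x‖ ≤ K * Real.sqrt (t - s) := by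
  rcases eq_or_lt_of_le hst with rfl | hlt
  · simp [intervalIntegral.integral_same]
  have hsub : Ioc s t ⊆ Icc T₁ T₂ := fun x hx => ⟨le_trans hs (le_of_lt hx.1), le_trans hx.2 ht⟩
  set r : ℝ := Real.sqrt (t - s) with hr_def
  have hts : (0:ℝ) < t - s := sub_pos.2 hlt
  have hr2 : r ^ 2 = t - s := Real.sq_sqrt hts.le
  have hrpos : 0 < r := Real.sqrt_pos.2 hts
  set ε : ℝ := r / K with hε_def
  have hεpos : 0 < ε := by positivity
  have step1 : ‖∫ x in s..t, f x‖ ≤ ∫ x in Ioc s t, ‖f x‖ := by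
    rw [intervalIntegral.integral_of_le hst]
    exact norm_integral_le_integral_norm f
  have hint1 : IntegrableOn (fun x => ‖f x‖) (Ioc s t) := IntegrableOn.mono_set hf1.norm hsub
  have hint2 : IntegrableOn (fun x => ‖f x‖ ^ 2) (Ioc s t) := hf2.mono_set hsub
  have step2 : (∫ x in Ioc s t, ‖f x‖) ≤ ∫ x in Ioc s t, (ε * ‖f x‖ ^ 2 + 1 / ε) / 2 := by
    refine setIntegral_mono_on hint1 ?_ measurableSet_Ioc (fun x _ => ?_)
    · exact (((hint2.const_mul ε).add (integrableOn_const (by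
        simp [Real.volume_Ioc]))).div_const 2)
    · have h1 : ε * (1 / ε) = 1 := mul_one_div_cancel hεpos.ne'
      nlinarith [sq_nonneg (ε * ‖f x‖ - 1), hεpos, norm_nonneg (f x)]
  have step3 : (∫ x in Ioc s t, (ε * ‖f x‖ ^ 2 + 1 / ε) / 2)
      = ((ε * ∫ x in Ioc s t, ‖f x‖ ^ 2) + (t - s) * (1 / ε)) / 2 := by
    rw [integral_div, integral_add (hint2.const_mul ε)
      (integrableOn_const (by simp [Real.volume_Ioc])),
      integral_const, integral_const_mul]
    simp [Measure.restrict_apply, Real.volume_Ioc, ENNReal.toReal_ofReal hts.le, smul_eq_mul, hst]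
  have step4 : (∫ x in Ioc s t, ‖f x‖ ^ 2) ≤ K ^ 2 := by
    refine le_trans (setIntegral_mono_set hf2 ?_ (HasSubset.Subset.eventuallyLE hsub)) hb
    exact Eventually.of_forall fun x => sq_nonneg _
  have final : ((ε * K ^ 2) + (t - s) * (1 / ε)) / 2 = K * r := by
    rw [hε_def]
    field_simp
    nlinarith [hr2]
  calc ‖∫ x in s..t, f x‖ ≤ ∫ x in Ioc s t, (ε * ‖f x‖ ^ 2 + 1 / ε) / 2 := le_trans step1 step2
    _ = ((ε * ∫ x in Ioc s t, ‖f x‖ ^ 2) + (t - s) * (1 / ε)) / 2 := step3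
    _ ≤ ((ε * K ^ 2) + (t - s) * (1 / ε)) / 2 := by
        have := mul_le_mul_of_nonneg_left step4 hεpos.le
        linarith
    _ = K * r := final
lemma dist_le_of_holder {E : Type*} [NormedAddCommGroup E] {K : ℝ} {S : Set ℝ} {F : ℝ → E}
    (h : ∀ s ∈ S, ∀ t ∈ S, s ≤ t → ‖F t - F s‖ ≤ K * Real.sqrt (t - s))
    {x y : ℝ} (hx : x ∈ S) (hy : y ∈ S) :
    dist (F x) (F y) ≤ K * Real.sqrt |x - y| := by
  rcases le_total x y with hxy | hxy
  · rw [dist_eq_norm, norm_sub_rev, abs_sub_comm, abs_of_nonneg (sub_nonneg.2 hxy)]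
    exact h x hx y hy hxy
  · rw [dist_eq_norm, abs_of_nonneg (sub_nonneg.2 hxy)]
    exact h y hy x hx hxy

lemma uniformEquicontinuousOn_of_holder {ι : Type*} {E : Type*} [NormedAddCommGroup E]
    {K : ℝ} (hK : 0 < K) (f : ι → ℝ → E) (S : Set ℝ)
    (h : ∀ i, ∀ s ∈ S, ∀ t ∈ S, s ≤ t → ‖f i t - f i s‖ ≤ K * Real.sqrt (t - s)) :
    UniformEquicontinuousOn f S := by
  intro U hU
  obtain ⟨ε, hε, hball⟩ := Metric.mem_uniformity_dist.1 hU
  rw [Filter.eventually_inf_principal]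
  set δ : ℝ := (ε / (2 * K)) ^ 2 with hδ_def
  have hδpos : 0 < δ := by positivity
  filter_upwards [Metric.dist_mem_uniformity hδpos] with xy hxy hmem i
  refine hball ?_
  have h1 : dist (f i xy.1) (f i xy.2) ≤ K * Real.sqrt |xy.1 - xy.2| :=
    dist_le_of_holder (h i) hmem.1 hmem.2
  have h2 : |xy.1 - xy.2| < δ := by rw [← Real.dist_eq]; exact hxy
  have h3 : Real.sqrt |xy.1 - xy.2| < ε / (2 * K) := by
    rw [show ε / (2 * K) = Real.sqrt δ by rw [hδ_def, Real.sqrt_sq (by positivity)]]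
    exact Real.sqrt_lt_sqrt (abs_nonneg _) h2
  calc dist (f i xy.1) (f i xy.2) ≤ K * Real.sqrt |xy.1 - xy.2| := h1
    _ < K * (ε / (2 * K)) := by exact mul_lt_mul_of_pos_left h3 hK
    _ = ε / 2 := by field_simp
    _ < ε := by linarith

lemma tendstoUniformlyOn_of_holder {E : Type*} [NormedAddCommGroup E]
    {T₁ T₂ K : ℝ} (hK : 0 < K)
    (f : ℕ → ℝ → E) (F : ℝ → E)
    (hf : ∀ n, ∀ s ∈ Icc T₁ T₂, ∀ t ∈ Icc T₁ T₂, s ≤ t →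
      ‖f n t - f n s‖ ≤ K * Real.sqrt (t - s))
    (hF : ∀ s ∈ Icc T₁ T₂, ∀ t ∈ Icc T₁ T₂, s ≤ t → ‖F t - F s‖ ≤ K * Real.sqrt (t - s))
    (hpt : ∀ t ∈ Icc T₁ T₂, Tendsto (fun n => f n t) atTop (𝓝 (F t))) :
    TendstoUniformlyOn f F atTop (Icc T₁ T₂) := by
  rw [Metric.tendstoUniformlyOn_iff]
  intro ε hε
  set δ : ℝ := (ε / (6 * K)) ^ 2 with hδ_def
  have hδpos : 0 < δ := by positivity
  have hKsd : K * Real.sqrt δ < ε / 3 := by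
    rw [hδ_def, Real.sqrt_sq (by positivity)]
    rw [mul_div_assoc']
    rw [div_lt_div_iff₀ (by positivity) (by positivity)]
    nlinarith
  obtain ⟨T, hTsub, hTfin, hTcov⟩ := finite_cover_balls_of_compact isCompact_Icc hδpos
    (s := Icc T₁ T₂)
  have hev : ∀ᶠ n in atTop, ∀ c ∈ T, dist (F c) (f n c) < ε / 3 := by
    rw [Set.Finite.eventually_all hTfin]  -- maybe wrong name
    intro c hc
    have := hpt c (hTsub hc)
    have : Tendsto (fun n => dist (F c) (f n c)) atTop (𝓝 0) := by
      simpa [dist_comm] using tendsto_iff_dist_tendsto_zero.1 this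
    exact this.eventually_lt_const (show (0:ℝ) < ε/3 by positivity)
  filter_upwards [hev] with n hn x hx
  obtain ⟨c, hcT, hcx⟩ := mem_iUnion₂.1 (hTcov hx)
  have hc : c ∈ Icc T₁ T₂ := hTsub hcT
  have hdist : dist x c < δ := Metric.mem_ball.1 hcx
  have b1 : dist (F x) (F c) ≤ K * Real.sqrt |x - c| := dist_le_of_holder hF hx hc
  have b3 : dist (f n x) (f n c) ≤ K * Real.sqrt |x - c| := dist_le_of_holder (hf n) hx hc
  have hsq : K * Real.sqrt |x - c| < ε / 3 := by
    refine lt_of_le_of_lt ?_ hKsd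
    refine mul_le_mul_of_nonneg_left (Real.sqrt_le_sqrt ?_) hK.le
    rw [← Real.dist_eq] at *
    exact hdist.le
  calc dist (F x) (f n x) ≤ dist (F x) (F c) + dist (F c) (f n c) + dist (f n c) (f n x) :=
        dist_triangle4 _ _ _ _
    _ < ε / 3 + ε / 3 + ε / 3 := by
        have := hn c hcT
        rw [dist_comm (f n c) (f n x)]
        linarith [b1, b3, hsq]
    _ = ε := by ring

/-- A path `φ : [T₁,T₂] → ℝᴺ` is admissible with derivative `g` if `g` is measurable with
square-integrable norm on `[T₁,T₂]` and `φ(t) = φ(T₁) + ∫_{T₁}^t g(s) ds` on `[T₁,T₂]`. -/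
def IsAdmissiblePath (N : ℕ) (T₁ T₂ : ℝ)
    (φ g : ℝ → EuclideanSpace ℝ (Fin N)) : Prop :=
  Measurable g ∧
  MeasureTheory.IntegrableOn (fun t => ‖g t‖ ^ 2) (Set.Icc T₁ T₂) ∧
  ∀ t ∈ Set.Icc T₁ T₂, φ t = φ T₁ + ∫ s in T₁..t, g s

set_option maxHeartbeats 2000000 in
set_option synthInstance.maxHeartbeats 400000 in
/-- Compactness of sublevel sets and lower semicontinuity of the
Freidlin–Wentzell action under uniform convergence of both paths and drift vector fields:
a sequence of paths with values in a compact set `M` and uniformly bounded actions (for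
drifts `uₙ → v` uniformly on `M`) is uniformly equicontinuous, and a subsequence converges
uniformly to an admissible path with values in `M` whose `v`-action is at most `k`. -/
theorem action_lower_semicontinuous_compactness (N : ℕ) (hN : 1 ≤ N)
    (M : Set (EuclideanSpace ℝ (Fin N))) (hM : IsCompact M)
    (T₁ T₂ : ℝ) (hT : T₁ < T₂) (k : ℝ) (hk : 0 ≤ k)
    (v : EuclideanSpace ℝ (Fin N) → EuclideanSpace ℝ (Fin N)) (hv : Continuous v)
    (u : ℕ → EuclideanSpace ℝ (Fin N) → EuclideanSpace ℝ (Fin N))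
    (hu : ∀ n, Continuous (u n))
    (huv : TendstoUniformlyOn u v Filter.atTop M)
    (φ g : ℕ → ℝ → EuclideanSpace ℝ (Fin N))
    (hadm : ∀ n, IsAdmissiblePath N T₁ T₂ (φ n) (g n))
    (hval : ∀ n, ∀ t ∈ Set.Icc T₁ T₂, φ n t ∈ M)
    (hact : ∀ n,
      (1 / 4) * (∫ t in Set.Icc T₁ T₂, ‖g n t - u n (φ n t)‖ ^ 2) ≤ k) :
    UniformEquicontinuousOn φ (Set.Icc T₁ T₂) ∧
    ∃ σ : ℕ → ℕ, StrictMono σ ∧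
      ∃ ψ G : ℝ → EuclideanSpace ℝ (Fin N),
        IsAdmissiblePath N T₁ T₂ ψ G ∧
        (∀ t ∈ Set.Icc T₁ T₂, ψ t ∈ M) ∧
        TendstoUniformlyOn (fun n => φ (σ n)) ψ Filter.atTop (Set.Icc T₁ T₂) ∧
        (1 / 4) * (∫ t in Set.Icc T₁ T₂, ‖G t - v (ψ t)‖ ^ 2) ≤ k := by
  classical
  let E := EuclideanSpace ℝ (Fin N)
  have hT₁ : T₁ ∈ Icc T₁ T₂ := ⟨le_refl _, hT.le⟩
  set μ : Measure ℝ := volume.restrict (Icc T₁ T₂) with hμ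
  haveI : IsFiniteMeasure μ := by
    constructor
    rw [hμ, Measure.restrict_apply_univ, Real.volume_Icc]
    exact ENNReal.ofReal_lt_top
  have hμuniv : (μ Set.univ).toReal = T₂ - T₁ := by
    rw [hμ, Measure.restrict_apply_univ, Real.volume_Icc, ENNReal.toReal_ofReal (by linarith)]
  have hae : ∀ᵐ x ∂μ, x ∈ Icc T₁ T₂ := by
    rw [hμ]; exact ae_restrict_mem measurableSet_Icc
  -- basic integrability
  have hgmeas : ∀ n, Measurable (g n) := fun n => (hadm n).1
  have hg2 : ∀ n, MemLp (g n) 2 μ := fun n =>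
    (memLp_two_iff_integrable_sq_norm (hgmeas n).aestronglyMeasurable).2 (hadm n).2.1
  have hg1 : ∀ n, Integrable (g n) μ := fun n => (hg2 n).integrable one_le_two
  have hgInd : ∀ n, Integrable ((Icc T₁ T₂).indicator (g n)) volume := fun n =>
    (integrable_indicator_iff measurableSet_Icc).2 (hg1 n)
  have hpath : ∀ n, ∀ t ∈ Icc T₁ T₂, φ n t = φ n T₁ + ∫ s in T₁..t, g n s :=
    fun n => (hadm n).2.2
  have hIntInt : ∀ n, ∀ a ∈ Icc T₁ T₂, ∀ b ∈ Icc T₁ T₂,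
      IntervalIntegrable (g n) volume a b := by
    intro n a ha b hb
    rw [intervalIntegrable_iff]
    refine IntegrableOn.mono_set (hg1 n) ?_
    intro x hx
    rcases le_total a b with h | h
    · rw [uIoc_of_le h] at hx
      exact ⟨le_trans ha.1 hx.1.le, le_trans hx.2 hb.2⟩
    · rw [uIoc_comm, uIoc_of_le h] at hx
      exact ⟨le_trans hb.1 hx.1.le, le_trans hx.2 ha.2⟩
  have hdiff : ∀ n, ∀ s ∈ Icc T₁ T₂, ∀ t ∈ Icc T₁ T₂,
      φ n t - φ n s = ∫ x in s..t, g n x := by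
    intro n s hs t ht
    rw [hpath n t ht, hpath n s hs]
    rw [← intervalIntegral.integral_add_adjacent_intervals
      (hIntInt n T₁ hT₁ s hs) (hIntInt n s hs t ht)]
    abel
  -- uniform bound on the drifts over M
  have hMne : M.Nonempty := ⟨φ 0 T₁, hval 0 T₁ hT₁⟩
  obtain ⟨Cv, hCv⟩ := hM.exists_bound_of_continuousOn hv.continuousOn
  have hCv0 : 0 ≤ Cv := le_trans (norm_nonneg _) (hCv _ hMne.choose_spec)
  have hCu' : ∀ n, ∃ C, ∀ z ∈ M, ‖u n z‖ ≤ C := fun n =>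
    hM.exists_bound_of_continuousOn (hu n).continuousOn
  choose Cu hCu using hCu'
  obtain ⟨n₀, hn₀⟩ := eventually_atTop.1 (Metric.tendstoUniformlyOn_iff.1 huv 1 one_pos)
  set B : ℝ := max (Cv + 1) ((Finset.range (n₀ + 1)).sup' (by simp) Cu) with hB
  have hBu : ∀ n, ∀ z ∈ M, ‖u n z‖ ≤ B := by
    intro n z hz
    rcases le_or_gt n n₀ with h | h
    · refine le_trans (hCu n z hz) (le_trans ?_ (le_max_right _ _))
      exact Finset.le_sup' Cu (Finset.mem_range.2 (by omega))
    · have h1 : dist (v z) (u n z) < 1 := hn₀ n h.le z hz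
      have h2 : ‖u n z‖ ≤ ‖v z‖ + 1 := by
        have := norm_sub_norm_le (u n z) (v z)
        rw [← dist_eq_norm, dist_comm] at this
        linarith [this, h1]
      exact le_trans h2 (le_trans (by linarith [hCv z hz]) (le_max_left _ _))
  have hBv : ∀ z ∈ M, ‖v z‖ ≤ B :=
    fun z hz => le_trans (hCv z hz) (le_trans (by linarith) (le_max_left _ _))
  have hB0 : 0 ≤ B := le_trans (by linarith) (le_max_left _ _)
  -- continuous version of the paths
  set Φ : ℕ → ℝ → EuclideanSpace ℝ (Fin N) := fun n t => φ n T₁ + ∫ s in T₁..t, (Icc T₁ T₂).indicator (g n) s with hΦ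
  have hΦcont : ∀ n, Continuous (Φ n) := fun n =>
    continuous_const.add ((hgInd n).continuous_primitive T₁)
  have hΦeq : ∀ n, ∀ t ∈ Icc T₁ T₂, Φ n t = φ n t := by
    intro n t ht
    rw [hpath n t ht, hΦ]
    simp only []
    congr 1
    refine intervalIntegral.integral_congr fun x hx => ?_
    refine indicator_of_mem ?_ (g n)
    rw [uIcc_of_le ht.1] at hx
    exact ⟨hx.1, le_trans hx.2 ht.2⟩
  -- MemLp of the drift terms along the paths
  have humem : ∀ n, MemLp (fun t => u n (φ n t)) 2 μ := by
    intro n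
    refine MemLp.of_bound (C := B) ?_ ?_
    · refine (((hu n).comp (hΦcont n)).aestronglyMeasurable).congr ?_
      exact hae.mono fun x hx => congrArg (u n) (hΦeq n x hx)
    · exact hae.mono fun x hx => hBu n _ (hval n x hx)
  -- Lp elements
  set X : ℕ → Lp (EuclideanSpace ℝ (Fin N)) 2 μ := fun n => (hg2 n).toLp (g n) with hX
  set Y : ℕ → Lp (EuclideanSpace ℝ (Fin N)) 2 μ := fun n => (humem n).toLp _ with hY
  have hXco : ∀ n, ⇑(X n) =ᵐ[μ] g n := fun n => (hg2 n).coeFn_toLp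
  have hYco : ∀ n, ⇑(Y n) =ᵐ[μ] fun t => u n (φ n t) := fun n => (humem n).coeFn_toLp
  have hXYnorm : ∀ n, ‖X n - Y n‖ ≤ 2 * Real.sqrt k := by
    intro n
    have hco : ⇑(X n - Y n) =ᵐ[μ] fun t => g n t - u n (φ n t) :=
      (Lp.coeFn_sub _ _).trans ((hXco n).sub (hYco n))
    have h1 : ‖X n - Y n‖ ^ 2 = ∫ t, ‖g n t - u n (φ n t)‖ ^ 2 ∂μ :=
      Lp_norm_sq_eq _ hco
    have h2 : (∫ t, ‖g n t - u n (φ n t)‖ ^ 2 ∂μ) ≤ 4 * k := by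
      have := hact n; rw [hμ]; linarith
    refine le_of_sq_le_sq' (norm_nonneg _) (by positivity) ?_
    rw [h1, mul_pow, Real.sq_sqrt hk]
    linarith
  have hYnorm : ∀ n, ‖Y n‖ ≤ B * Real.sqrt (T₂ - T₁) := by
    intro n
    have h1 : ‖Y n‖ ^ 2 = ∫ t, ‖u n (φ n t)‖ ^ 2 ∂μ := Lp_norm_sq_eq _ (hYco n)
    have h2 : (∫ t, ‖u n (φ n t)‖ ^ 2 ∂μ) ≤ B ^ 2 * (T₂ - T₁) := by
      have hle : (∫ t, ‖u n (φ n t)‖ ^ 2 ∂μ) ≤ ∫ _, B ^ 2 ∂μ := by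
        refine integral_mono_ae ?_ (integrable_const _) ?_
        · exact (memLp_two_iff_integrable_sq_norm (humem n).aestronglyMeasurable).1 (humem n)
        · refine hae.mono fun x hx => ?_
          show ‖u n (φ n x)‖ ^ 2 ≤ B ^ 2
          have := hBu n _ (hval n x hx)
          nlinarith [norm_nonneg (u n (φ n x)), hB0]
      rw [integral_const, smul_eq_mul, measureReal_def, hμuniv] at hle
      linarith
    refine le_of_sq_le_sq' (norm_nonneg _) (by positivity) ?_
    rw [h1, mul_pow, Real.sq_sqrt (by linarith : (0:ℝ) ≤ T₂ - T₁)]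
    linarith
  set C₀ : ℝ := 2 * Real.sqrt k + B * Real.sqrt (T₂ - T₁) + 1 with hC₀
  have hC₀pos : 0 < C₀ := by
    have : 0 ≤ 2 * Real.sqrt k := by positivity
    have : 0 ≤ B * Real.sqrt (T₂ - T₁) := by positivity
    rw [hC₀]; linarith
  have hXbound : ∀ n, ‖X n‖ ≤ C₀ := by
    intro n
    calc ‖X n‖ = ‖(X n - Y n) + Y n‖ := by rw [sub_add_cancel]
      _ ≤ ‖X n - Y n‖ + ‖Y n‖ := norm_add_le _ _
      _ ≤ 2 * Real.sqrt k + B * Real.sqrt (T₂ - T₁) := add_le_add (hXYnorm n) (hYnorm n)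
      _ ≤ C₀ := by rw [hC₀]; linarith
  have hgsq : ∀ n, (∫ t in Icc T₁ T₂, ‖g n t‖ ^ 2) ≤ C₀ ^ 2 := by
    intro n
    have h1 : ‖X n‖ ^ 2 = ∫ t, ‖g n t‖ ^ 2 ∂μ := Lp_norm_sq_eq _ (hXco n)
    have h2 : ‖X n‖ ^ 2 ≤ C₀ ^ 2 := by nlinarith [hXbound n, norm_nonneg (X n)]
    have h3 : (∫ t in Icc T₁ T₂, ‖g n t‖ ^ 2) = ∫ t, ‖g n t‖ ^ 2 ∂μ := rfl
    rw [h3]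
    linarith
  have hHolder : ∀ n, ∀ s ∈ Icc T₁ T₂, ∀ t ∈ Icc T₁ T₂, s ≤ t →
      ‖φ n t - φ n s‖ ≤ C₀ * Real.sqrt (t - s) := by
    intro n s hs t ht hst
    rw [hdiff n s hs t ht]
    exact holder_bound (hadm n).2.1 (hg1 n) hC₀pos (hgsq n) hs.1 hst ht.2
  have hequi : UniformEquicontinuousOn φ (Icc T₁ T₂) :=
    uniformEquicontinuousOn_of_holder hC₀pos φ _ hHolder
  refine ⟨hequi, ?_⟩
  -- subsequence extraction
  obtain ⟨ψ₀, hψ₀M, σ₁, hσ₁, hσ₁tend⟩ := hM.tendsto_subseq (x := fun n => φ n T₁)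
    (fun n => hval n T₁ hT₁)
  haveI : Fact ((2:ℝ≥0∞) ≠ ∞) := ⟨ENNReal.ofNat_ne_top⟩
  haveI : SecondCountableTopology (Lp (EuclideanSpace ℝ (Fin N)) 2 μ) :=
    MeasureTheory.Lp.SecondCountableTopology
  obtain ⟨σ₂, hσ₂, Glim, hGLnorm, hweak⟩ := exists_weak_subseq (fun n => X (σ₁ n)) C₀
    (fun n => hXbound _)
  set σ : ℕ → ℕ := σ₁ ∘ σ₂ with hσ_def
  have hσ : StrictMono σ := hσ₁.comp hσ₂
  have hσtop : Tendsto σ atTop atTop := hσ.tendsto_atTop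
  -- measurable representative of the weak limit
  have hGLmem : MemLp (⇑Glim) 2 μ := Lp.memLp Glim
  have hGL_asm := hGLmem.aestronglyMeasurable
  set G₁ : ℝ → EuclideanSpace ℝ (Fin N) := hGL_asm.mk _ with hG₁def
  have hG₁meas : Measurable G₁ := hGL_asm.stronglyMeasurable_mk.measurable
  have hG₁eq : ⇑Glim =ᵐ[μ] G₁ := hGL_asm.ae_eq_mk
  set G : ℝ → EuclideanSpace ℝ (Fin N) := (Icc T₁ T₂).indicator G₁ with hGdef
  have hGmeas : Measurable G := hG₁meas.indicator measurableSet_Icc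
  have hGae : (⇑Glim : ℝ → EuclideanSpace ℝ (Fin N)) =ᵐ[μ] G :=
    hG₁eq.trans (hae.mono fun x hx => (indicator_of_mem hx G₁).symm)
  have hGmem : MemLp G 2 μ := hGLmem.ae_eq hGae
  have hGint2 : IntegrableOn (fun t => ‖G t‖ ^ 2) (Icc T₁ T₂) volume :=
    (memLp_two_iff_integrable_sq_norm hGmem.aestronglyMeasurable).1 hGmem
  have hGint1 : Integrable G μ := hGmem.integrable one_le_two
  have hGvol : Integrable G volume := by
    rw [hGdef]
    refine (integrable_indicator_iff measurableSet_Icc).2 ?_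
    exact hGint1.congr (hae.mono fun x hx => indicator_of_mem hx G₁)
  have hGnormsq : (∫ t in Icc T₁ T₂, ‖G t‖ ^ 2) ≤ C₀ ^ 2 := by
    have h1 : ‖Glim‖ ^ 2 = ∫ t, ‖G t‖ ^ 2 ∂μ := Lp_norm_sq_eq _ hGae
    have h2 : (∫ t in Icc T₁ T₂, ‖G t‖ ^ 2) = ∫ t, ‖G t‖ ^ 2 ∂μ := rfl
    rw [h2, ← h1]
    nlinarith [hGLnorm, norm_nonneg Glim]
  -- the limit path
  set ψ : ℝ → EuclideanSpace ℝ (Fin N) := fun t => ψ₀ + ∫ s in T₁..t, G s with hψdef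
  have hψcont : Continuous ψ := continuous_const.add (hGvol.continuous_primitive T₁)
  have hψT₁ : ψ T₁ = ψ₀ := by rw [hψdef]; simp
  have hψadm : IsAdmissiblePath N T₁ T₂ ψ G := by
    refine ⟨hGmeas, hGint2, fun t ht => ?_⟩
    rw [hψT₁]
  have hψdiff : ∀ s t : ℝ, ψ t - ψ s = ∫ x in s..t, G x := by
    intro s t
    rw [hψdef]
    simp only []
    rw [← intervalIntegral.integral_add_adjacent_intervals
      (a := T₁) (b := s) (c := t) hGvol.intervalIntegrable hGvol.intervalIntegrable]
    abel
  have hψHolder : ∀ s ∈ Icc T₁ T₂, ∀ t ∈ Icc T₁ T₂, s ≤ t →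
      ‖ψ t - ψ s‖ ≤ C₀ * Real.sqrt (t - s) := by
    intro s hs t ht hst
    rw [hψdiff s t]
    exact holder_bound hGint2 hGint1 hC₀pos hGnormsq hs.1 hst ht.2
  -- pointwise convergence along the subsequence
  have hres : ∀ t ∈ Icc T₁ T₂, μ.restrict (Ioc T₁ t) = volume.restrict (Ioc T₁ t) := by
    intro t ht
    rw [hμ, Measure.restrict_restrict measurableSet_Ioc]
    congr 1
    exact inter_eq_self_of_subset_left fun x hx => ⟨hx.1.le, le_trans hx.2 ht.2⟩
  have hμIoc : ∀ t : ℝ, μ (Ioc T₁ t) ≠ ⊤ := fun t =>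
    (lt_of_le_of_lt (measure_mono (subset_univ _)) (measure_lt_top μ _)).ne
  have hpt : ∀ t ∈ Icc T₁ T₂, Tendsto (fun n => φ (σ n) t) atTop (𝓝 (ψ t)) := by
    intro t ht
    have hint_conv : Tendsto (fun n => ∫ x in Ioc T₁ t, g (σ n) x ∂volume) atTop
        (𝓝 (∫ x in Ioc T₁ t, G x ∂volume)) := by
      apply tendsto_of_forall_inner
      intro c
      set z : Lp (EuclideanSpace ℝ (Fin N)) 2 μ :=
        indicatorConstLp 2 measurableSet_Ioc (hμIoc t) c with hz
      have pair : ∀ (f : ℝ → EuclideanSpace ℝ (Fin N)) (F : Lp (EuclideanSpace ℝ (Fin N)) 2 μ),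
          ⇑F =ᵐ[μ] f → Integrable f μ →
          (⟪z, F⟫ : ℝ) = ⟪c, ∫ x in Ioc T₁ t, f x ∂volume⟫ := by
        intro f F hFf hf
        have hf' : Integrable f (volume.restrict (Ioc T₁ t)) := by
          rw [← hres t ht]
          exact hf.mono_measure Measure.restrict_le_self
        rw [hz, MeasureTheory.L2.inner_indicatorConstLp_eq_setIntegral_inner ℝ F
          measurableSet_Ioc c (hμIoc t)]
        have h1 : (∫ x in Ioc T₁ t, (⟪c, F x⟫ : ℝ) ∂μ) = ∫ x in Ioc T₁ t, (⟪c, f x⟫ : ℝ) ∂μ :=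
          integral_congr_ae ((hFf.restrict (s := Ioc T₁ t)).fun_comp fun y => (⟪c, y⟫ : ℝ))
        rw [h1, hres t ht, integral_inner hf']
      have e1 : ∀ n, (⟪z, X (σ n)⟫ : ℝ) = ⟪c, ∫ x in Ioc T₁ t, g (σ n) x ∂volume⟫ :=
        fun n => pair _ _ (hXco (σ n)) (hg1 (σ n))
      have e2 : (⟪z, Glim⟫ : ℝ) = ⟪c, ∫ x in Ioc T₁ t, G x ∂volume⟫ := pair _ _ hGae hGint1
      have h := hweak z
      rw [e2] at h
      exact Filter.Tendsto.congr (fun n => e1 n) h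
    have hφt : ∀ n, φ (σ n) t = φ (σ n) T₁ + ∫ x in Ioc T₁ t, g (σ n) x ∂volume := by
      intro n
      rw [hpath (σ n) t ht, intervalIntegral.integral_of_le ht.1]
    have hψt : ψ t = ψ₀ + ∫ x in Ioc T₁ t, G x ∂volume := by
      rw [hψdef]
      simp only []
      rw [intervalIntegral.integral_of_le ht.1]
    rw [hψt]
    refine Filter.Tendsto.congr (fun n => (hφt n).symm) (Tendsto.add ?_ hint_conv)
    exact hσ₁tend.comp hσ₂.tendsto_atTop
  have hunif : TendstoUniformlyOn (fun n => φ (σ n)) ψ atTop (Icc T₁ T₂) :=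
    tendstoUniformlyOn_of_holder hC₀pos _ _ (fun n => hHolder (σ n)) hψHolder hpt
  have hψM : ∀ t ∈ Icc T₁ T₂, ψ t ∈ M := fun t ht =>
    hM.isClosed.mem_of_tendsto (hpt t ht) (Eventually.of_forall fun n => hval (σ n) t ht)
  -- the limit drift term
  have hwmem : MemLp (fun t => v (ψ t)) 2 μ := by
    refine MemLp.of_bound ((hv.comp hψcont).aestronglyMeasurable) B ?_
    exact hae.mono fun x hx => hBv _ (hψM x hx)
  set W : Lp (EuclideanSpace ℝ (Fin N)) 2 μ := hwmem.toLp _ with hW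
  have hWco : ⇑W =ᵐ[μ] fun t => v (ψ t) := hwmem.coeFn_toLp
  -- strong L² convergence of the drift terms
  have hYW : ∀ ε > 0, ∀ᶠ n in atTop, ‖Y (σ n) - W‖ ≤ ε := by
    intro ε hε
    set δ : ℝ := ε / (Real.sqrt (T₂ - T₁) + 1) with hδ
    have hδpos : 0 < δ := by positivity
    have h1 : ∀ᶠ n in atTop, ∀ x ∈ M, dist (v x) (u (σ n) x) < δ / 2 :=
      hσtop.eventually (Metric.tendstoUniformlyOn_iff.1 huv (δ / 2) (by positivity))
    obtain ⟨η, hη, hvu⟩ := Metric.uniformContinuousOn_iff.1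
      (hM.uniformContinuousOn_of_continuous hv.continuousOn) (δ / 2) (by positivity)
    have h2 : ∀ᶠ n in atTop, ∀ t ∈ Icc T₁ T₂, dist (ψ t) (φ (σ n) t) < η :=
      Metric.tendstoUniformlyOn_iff.1 hunif η hη
    filter_upwards [h1, h2] with n hn1 hn2
    have hptw : ∀ᵐ x ∂μ, ‖u (σ n) (φ (σ n) x) - v (ψ x)‖ ≤ δ := by
      refine hae.mono fun x hx => ?_
      have hxM : φ (σ n) x ∈ M := hval (σ n) x hx
      have ha' : dist (v (φ (σ n) x)) (v (ψ x)) < δ / 2 := by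
        refine hvu _ hxM _ (hψM x hx) ?_
        rw [dist_comm]
        exact hn2 x hx
      have hb' : dist (u (σ n) (φ (σ n) x)) (v (φ (σ n) x)) < δ / 2 := by
        rw [dist_comm]
        exact hn1 _ hxM
      calc ‖u (σ n) (φ (σ n) x) - v (ψ x)‖
          = dist (u (σ n) (φ (σ n) x)) (v (ψ x)) := (dist_eq_norm _ _).symm
        _ ≤ dist (u (σ n) (φ (σ n) x)) (v (φ (σ n) x)) + dist (v (φ (σ n) x)) (v (ψ x)) :=
            dist_triangle _ _ _
        _ ≤ δ := by linarith
    have hsub2 : MemLp (fun t => u (σ n) (φ (σ n) t) - v (ψ t)) 2 μ := (humem (σ n)).sub hwmem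
    have hYWco : ⇑(Y (σ n) - W) =ᵐ[μ] fun t => u (σ n) (φ (σ n) t) - v (ψ t) :=
      (Lp.coeFn_sub _ _).trans ((hYco (σ n)).sub hWco)
    have hnorm2 : ‖Y (σ n) - W‖ ^ 2 ≤ δ ^ 2 * (T₂ - T₁) := by
      rw [Lp_norm_sq_eq _ hYWco]
      have hle : (∫ t, ‖u (σ n) (φ (σ n) t) - v (ψ t)‖ ^ 2 ∂μ) ≤ ∫ _, δ ^ 2 ∂μ := by
        refine integral_mono_ae
          ((memLp_two_iff_integrable_sq_norm hsub2.aestronglyMeasurable).1 hsub2)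
          (integrable_const _) ?_
        refine hptw.mono fun x hx => ?_
        show ‖u (σ n) (φ (σ n) x) - v (ψ x)‖ ^ 2 ≤ δ ^ 2
        nlinarith [norm_nonneg (u (σ n) (φ (σ n) x) - v (ψ x))]
      rw [integral_const, smul_eq_mul, measureReal_def, hμuniv] at hle
      linarith
    refine le_of_sq_le_sq' (norm_nonneg _) hε.le ?_
    refine le_trans hnorm2 ?_
    have hs : Real.sqrt (T₂ - T₁) ^ 2 = T₂ - T₁ := Real.sq_sqrt (by linarith)
    rw [hδ, div_pow, div_mul_eq_mul_div, div_le_iff₀ (by positivity)]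
    nlinarith [Real.sqrt_nonneg (T₂ - T₁), hε.le, sq_nonneg ε]
  -- weak lower semicontinuity of the norm
  have hlim : Tendsto (fun n => (⟪Glim - W, X (σ n) - W⟫ : ℝ)) atTop (𝓝 (‖Glim - W‖ ^ 2)) := by
    have h1 : Tendsto (fun n => (⟪Glim - W, X (σ n)⟫ : ℝ) - ⟪Glim - W, W⟫) atTop
        (𝓝 ((⟪Glim - W, Glim⟫ : ℝ) - ⟪Glim - W, W⟫)) := (hweak (Glim - W)).sub_const _
    have h2 : (⟪Glim - W, Glim⟫ : ℝ) - ⟪Glim - W, W⟫ = ‖Glim - W‖ ^ 2 := by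
      rw [← inner_sub_right, real_inner_self_eq_norm_sq]
    rw [h2] at h1
    exact h1.congr fun n => (inner_sub_right _ _ _).symm
  have hD : ‖Glim - W‖ ^ 2 ≤ ‖Glim - W‖ * (2 * Real.sqrt k) := by
    rcases eq_or_lt_of_le (norm_nonneg (Glim - W)) with hD0 | hDpos
    · rw [← hD0]
      simp
    refine le_of_forall_pos_le_add fun δ hδ => ?_
    have hε : (0:ℝ) < δ / ‖Glim - W‖ := by positivity
    refine le_of_tendsto hlim ?_
    filter_upwards [hYW _ hε] with n hn
    have step : (⟪Glim - W, X (σ n) - W⟫ : ℝ)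
        = (⟪Glim - W, X (σ n) - Y (σ n)⟫ : ℝ) + ⟪Glim - W, Y (σ n) - W⟫ := by
      rw [← inner_add_right]
      congr 1
      abel
    rw [step]
    have b1 : (⟪Glim - W, X (σ n) - Y (σ n)⟫ : ℝ) ≤ ‖Glim - W‖ * (2 * Real.sqrt k) := by
      refine le_trans (real_inner_le_norm _ _) ?_
      exact mul_le_mul_of_nonneg_left (hXYnorm _) (norm_nonneg _)
    have b2 : (⟪Glim - W, Y (σ n) - W⟫ : ℝ) ≤ δ := by
      refine le_trans (real_inner_le_norm _ _) ?_
      calc ‖Glim - W‖ * ‖Y (σ n) - W‖ ≤ ‖Glim - W‖ * (δ / ‖Glim - W‖) :=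
            mul_le_mul_of_nonneg_left hn (norm_nonneg _)
        _ = δ := by field_simp
    linarith
  have hDk : ‖Glim - W‖ ^ 2 ≤ 4 * k := by
    nlinarith [sq_nonneg (‖Glim - W‖ - 2 * Real.sqrt k), Real.sq_sqrt hk,
      Real.sqrt_nonneg k, norm_nonneg (Glim - W)]
  have hfin : (1 / 4 : ℝ) * (∫ t in Icc T₁ T₂, ‖G t - v (ψ t)‖ ^ 2) ≤ k := by
    have hco : ⇑(Glim - W) =ᵐ[μ] fun t => G t - v (ψ t) :=
      (Lp.coeFn_sub _ _).trans (hGae.sub hWco)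
    have h1 : ‖Glim - W‖ ^ 2 = ∫ t, ‖G t - v (ψ t)‖ ^ 2 ∂μ := Lp_norm_sq_eq _ hco
    have h2 : (∫ t in Icc T₁ T₂, ‖G t - v (ψ t)‖ ^ 2) = ∫ t, ‖G t - v (ψ t)‖ ^ 2 ∂μ := rfl
    rw [h2, ← h1]
    linarith
  exact ⟨σ, hσ, ψ, G, hψadm, hψM, hunif, hfin⟩
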